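/- arXiv:1504.07411 — 5 statements merged into one kernel-verified Lean document; each statement's English description precedes it below -/
import Mathlib

section
/- For every k ≥ 1 there exists an integer n ≤ 100^{100^k} such that n has at least k representations as a sum of two positive cubes x³ + y³ with 0 < y ≤ x. -/
open Filter

/-- Number of representations of `n` as `a i + a j`, `i ≤ j` (indices into the sequence `a`).
Since `a` is strictly increasing in all uses, `a i ≥ i`, so indices are bounded by `n`. -/
def Rf (a : ℕ → ℕ) (n : ℕ) : ℕ :=
  ((Finset.range (n+1) ×ˢ Finset.range (n+1)).filter
    (fun p => p.1 ≤ p.2 ∧ a p.1 + a p.2 = n)).card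

/-- `s_A(x) = max_{n ≤ x} R_A(n)`. -/
def sf (a : ℕ → ℕ) (x : ℕ) : ℕ := (Finset.range (x+1)).sup (Rf a)

/-- `d_{A,B}(x) = max_{t : a_t ≤ x ∨ b_t ≤ x} |a_t - b_t|`. For strictly increasing
sequences any such index `t` satisfies `t ≤ x`. -/
def df (a b : ℕ → ℕ) (x : ℕ) : ℕ :=
  (Finset.range (x+1)).sup (fun t => if a t ≤ x ∨ b t ≤ x then Nat.dist (a t) (b t) else 0)

/-- Number of representations of `n` as `p + q` with `p ≤ q`, `p, q ∈ A`. -/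
noncomputable def RS (A : Set ℕ) (n : ℕ) : ℕ :=
  Nat.card {p : ℕ × ℕ // p.1 ∈ A ∧ p.2 ∈ A ∧ p.1 ≤ p.2 ∧ p.1 + p.2 = n}

/-- `s_A(x) = max_{n ≤ x} R_A(n)` for a set `A`. -/
noncomputable def sS (A : Set ℕ) (x : ℕ) : ℕ := (Finset.range (x+1)).sup (RS A)

namespace S12


def XX (x y : ℤ) : ℤ := x * (x^3 + 2*y^3)
def ZZ (x y : ℤ) : ℤ := y * (2*x^3 + y^3)
def F1 (x y : ℤ) : ℤ := XX x y * ((XX x y)^3 - 2*(ZZ x y)^3)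
def F2 (x y : ℤ) : ℤ := ZZ x y * (2*(XX x y)^3 - (ZZ x y)^3)
def EE (x y : ℤ) : ℤ := (x^3 - y^3) * ((XX x y)^3 + (ZZ x y)^3)

lemma TT (a b : ℤ) : (a*(a^3+2*b^3))^3 + (-b*(2*a^3+b^3))^3 = (a^3+b^3)*(a^3-b^3)^3 := by
  ring

lemma cubes_id (x y : ℤ) : (F1 x y)^3 + (F2 x y)^3 = (x^3+y^3) * (EE x y)^3 := by
  have h1 := TT (XX x y) (-(ZZ x y))
  have h2 := TT x y
  simp only [F1, F2, EE, XX, ZZ] at *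
  linear_combination h1 + ((x * (x ^ 3 + 2 * y ^ 3))^3 + (y * (2 * x ^ 3 + y ^ 3))^3)^3 * h2


set_option maxHeartbeats 1600000 in
lemma step (x y : ℤ) (hy : 1 ≤ y) (hx : 8*y ≤ x) :
    1 ≤ F2 x y ∧ 1 ≤ F1 x y ∧ x * F2 x y ≤ 5 * (y * F1 x y) ∧
    y * F1 x y < x * F2 x y ∧ 1 ≤ EE x y ∧ F1 x y ≤ x ^ 20 := by
  have hy0 : (0:ℤ) < y := by linarith
  have hx8 : (8:ℤ) ≤ x := by nlinarith
  have hx0 : (0:ℤ) < x := by linarith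
  have hy3 : (1:ℤ) ≤ y^3 := by
    have := pow_le_pow_left₀ (by norm_num : (0:ℤ) ≤ 1) hy 3; simpa using this
  have hx3 : 512*y^3 ≤ x^3 := by
    have h := pow_le_pow_left₀ (by positivity : (0:ℤ) ≤ 8*y) hx 3
    nlinarith [h]
  simp only [F1, F2, EE, XX, ZZ]
  set A := x * (x^3 + 2*y^3) with hA
  set B := y * (2*x^3 + y^3) with hB
  have hB1 : 1 ≤ B := by
    rw [hB]; nlinarith [mul_le_mul hy (show (1:ℤ) ≤ 2*x^3+y^3 by nlinarith) (by norm_num) (by linarith : (0:ℤ) ≤ y)]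
  have hA4 : 4*B ≤ A := by
    rw [hA, hB]
    have h := mul_le_mul_of_nonneg_right hx (show (0:ℤ) ≤ x^3+2*y^3 by nlinarith)
    nlinarith [h, pow_nonneg hy0.le 4]
  have hA0 : (0:ℤ) < A := by linarith
  have hA1 : (1:ℤ) ≤ A := by linarith
  have hAB3 : 64*B^3 ≤ A^3 := by
    have h := pow_le_pow_left₀ (by linarith : (0:ℤ) ≤ 4*B) hA4 3
    nlinarith [h]
  have hB3 : 1 ≤ B^3 := by
    have := pow_le_pow_left₀ (by norm_num : (0:ℤ) ≤ 1) hB1 3; simpa using this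
  have hA3 : (0:ℤ) < A^3 := pow_pos hA0 3
  -- F2 ≥ 1
  have h127 : (1:ℤ) ≤ 2*A^3 - B^3 := by linarith
  have hF2 : 1 ≤ B*(2*A^3 - B^3) := by
    nlinarith [mul_le_mul hB1 h127 (by norm_num) (by linarith : (0:ℤ) ≤ B)]
  -- F1 ≥ 1
  have h62 : (1:ℤ) ≤ A^3 - 2*B^3 := by linarith
  have hF1 : 1 ≤ A*(A^3 - 2*B^3) := by
    nlinarith [mul_le_mul hA1 h62 (by norm_num) (by linarith : (0:ℤ) ≤ A)]
  refine ⟨hF2, hF1, ?_, ?_, ?_, ?_⟩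
  · -- x*F2 ≤ 5*(y*F1)
    have key1 : 64*(x*B) ≤ 155*(y*A) := by
      rw [hA, hB]
      nlinarith [mul_nonneg (mul_nonneg hx0.le hy0.le) (pow_nonneg hx0.le 3),
        mul_nonneg (mul_nonneg hx0.le hy0.le) (pow_nonneg hy0.le 3)]
    have c1 : x*(B*(2*A^3 - B^3)) ≤ x*(B*(2*A^3)) := by
      have : B*(2*A^3 - B^3) ≤ B*(2*A^3) := by nlinarith [hB1, hB3]
      exact mul_le_mul_of_nonneg_left this hx0.le
    have c3 := mul_le_mul_of_nonneg_right key1 (pow_nonneg hA0.le 3)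
    have c4 := mul_le_mul_of_nonneg_left (show 31*A^3 ≤ 32*(A^3 - 2*B^3) by linarith)
        (mul_nonneg hy0.le hA0.le)
    nlinarith [c1, c3, c4]
  · -- y*F1 < x*F2
    have key2 : 192*(y*A) ≤ 127*(x*B) := by
      rw [hA, hB]
      nlinarith [mul_nonneg (mul_nonneg hx0.le hy0.le) (show (0:ℤ) ≤ 62*x^3 - 257*y^3 by linarith)]
    have d1 := mul_le_mul_of_nonneg_left (show 127*A^3 ≤ 64*(2*A^3 - B^3) by linarith)
        (mul_nonneg hx0.le (by linarith : (0:ℤ) ≤ B))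
    have d2 := mul_le_mul_of_nonneg_left (show A^3 - 2*B^3 ≤ A^3 by linarith)
        (mul_nonneg hy0.le hA0.le)
    have d3 := mul_le_mul_of_nonneg_right key2 (pow_nonneg hA0.le 3)
    have hyF1 : 0 < y*(A*(A^3-2*B^3)) := by positivity
    nlinarith [d1, d2, d3, hyF1]
  · -- 1 ≤ EE
    have h5 : (1:ℤ) ≤ x^3 - y^3 := by linarith
    have h6 : (1:ℤ) ≤ A^3 + B^3 := by linarith
    calc (1:ℤ) = 1*1 := by norm_num
      _ ≤ (x^3 - y^3)*(A^3 + B^3) := mul_le_mul h5 h6 (by norm_num) (by linarith)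
  · -- F1 ≤ x^20
    have e1 : A ≤ 3*x^4 := by
      rw [hA]
      nlinarith [mul_le_mul_of_nonneg_left (show y^3 ≤ x^3 by linarith) hx0.le]
    have e3 : A*(A^3 - 2*B^3) ≤ A^4 := by
      nlinarith [mul_le_mul_of_nonneg_left (show A^3 - 2*B^3 ≤ A^3 by linarith) hA0.le]
    have e2 : A^4 ≤ (3*x^4)^4 := pow_le_pow_left₀ hA0.le e1 4
    have h84 : (4096:ℤ) ≤ x^4 := by
      have := pow_le_pow_left₀ (by norm_num : (0:ℤ) ≤ 8) hx8 4
      nlinarith [this]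
    calc A*(A^3 - 2*B^3) ≤ A^4 := e3
      _ ≤ (3*x^4)^4 := e2
      _ = 81*x^16 := by ring
      _ ≤ x^4*x^16 := mul_le_mul_of_nonneg_right (by linarith) (pow_nonneg hx0.le 16)
      _ = x^20 := by ring


lemma iter : ∀ (m : ℕ) (x y : ℤ), 1 ≤ y → 8*5^m*y ≤ x →
    ∃ (n D : ℤ) (f : ℕ → ℤ × ℤ),
      1 ≤ D ∧ n = (x^3+y^3)*D^3 ∧ f 0 = (x*D, y*D) ∧ n ≤ x^(4*20^m) ∧
      (∀ i ≤ m, 1 ≤ (f i).2 ∧ (f i).2 ≤ (f i).1 ∧ (f i).1^3 + (f i).2^3 = n) ∧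
      (∀ i < m, (f i).2 * (f (i+1)).1 < (f (i+1)).2 * (f i).1) := by
  intro m
  induction m with
  | zero =>
    intro x y hy hx
    simp only [pow_zero, mul_one] at hx
    have hx8 : (8:ℤ) ≤ x := by nlinarith
    have hyx : y ≤ x := by linarith
    refine ⟨x^3+y^3, 1, fun _ => (x,y), le_refl 1, by ring, by simp, ?_, ?_, ?_⟩
    · have hy3 : y^3 ≤ x^3 := pow_le_pow_left₀ (by linarith) hyx 3
      have : x^3+y^3 ≤ 2*x^3 := by linarith
      calc x^3+y^3 ≤ 2*x^3 := this
        _ ≤ x*x^3 := mul_le_mul_of_nonneg_right (by linarith) (by positivity)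
        _ = x^(4*20^0) := by ring
    · intro i _
      exact ⟨hy, hyx, rfl⟩
    · intro i hi; omega
  | succ m ih =>
    intro x y hy hx
    have h5p : (1:ℤ) ≤ 5^m := one_le_pow₀ (by norm_num)
    have h5p1 : (1:ℤ) ≤ 5^(m+1) := one_le_pow₀ (by norm_num)
    have hx8 : 8*y ≤ x := by nlinarith
    obtain ⟨hF2, hF1, hrat, hlt, hEE, hbd⟩ := step x y hy hx8
    have hy0 : (0:ℤ) < y := by linarith
    have hx0 : (0:ℤ) < x := by nlinarith
    -- 8*5^m * F2 ≤ F1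
    have hx' : 8*5^m*(F2 x y) ≤ F1 x y := by
      have c1 : (8*5^(m+1)*y)*(F2 x y) ≤ x*(F2 x y) :=
        mul_le_mul_of_nonneg_right hx (by linarith)
      have c2 : (5*y)*(8*5^m*(F2 x y)) ≤ (5*y)*(F1 x y) := by
        calc (5*y)*(8*5^m*(F2 x y)) = (8*5^(m+1)*y)*(F2 x y) := by ring
          _ ≤ x*(F2 x y) := c1
          _ ≤ 5*(y*(F1 x y)) := hrat
          _ = (5*y)*(F1 x y) := by ring
      exact le_of_mul_le_mul_left c2 (by linarith)
    obtain ⟨n, D', f', hD', hnD', hf0', hbound', hprops', hchain'⟩ := ih (F1 x y) (F2 x y) hF2 hx'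
    refine ⟨n, EE x y * D', fun i => if i = 0 then (x*(EE x y*D'), y*(EE x y*D')) else f' (i-1),
      ?_, ?_, by simp, ?_, ?_, ?_⟩
    · calc (1:ℤ) = 1*1 := by norm_num
        _ ≤ EE x y * D' := mul_le_mul hEE hD' (by norm_num) (by linarith)
    · rw [hnD', cubes_id x y]; ring
    · -- n ≤ x^(4*20^(m+1))
      have h1 : n ≤ (F1 x y)^(4*20^m) := hbound'
      have h2 : (F1 x y)^(4*20^m) ≤ (x^20)^(4*20^m) :=
        pow_le_pow_left₀ (by linarith) hbd _
      calc n ≤ (F1 x y)^(4*20^m) := h1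
        _ ≤ (x^20)^(4*20^m) := h2
        _ = x^(4*20^(m+1)) := by rw [← pow_mul]; ring_nf
    · intro i hi
      match i with
      | 0 =>
        have hED : (1:ℤ) ≤ EE x y * D' := by
          calc (1:ℤ) = 1*1 := by norm_num
            _ ≤ EE x y * D' := mul_le_mul hEE hD' (by norm_num) (by linarith)
        refine ⟨?_, ?_, ?_⟩
        · show (1:ℤ) ≤ y * (EE x y * D')
          calc (1:ℤ) = 1*1 := by norm_num
            _ ≤ y * (EE x y * D') := mul_le_mul hy hED (by norm_num) (by linarith)
        · show y * (EE x y * D') ≤ x * (EE x y * D')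
          exact mul_le_mul_of_nonneg_right (by linarith) (by linarith)
        · show (x*(EE x y * D'))^3 + (y*(EE x y * D'))^3 = n
          rw [hnD', cubes_id x y]; ring
      | j+1 =>
        simp only [Nat.succ_ne_zero, if_false, Nat.add_sub_cancel]
        exact hprops' j (by omega)
    · intro i hi
      match i with
      | 0 =>
        show (y*(EE x y * D')) * (f' 0).1 < (f' 0).2 * (x*(EE x y * D'))
        rw [hf0']
        have hpos : (0:ℤ) < (EE x y * D') * D' := by
          have : (1:ℤ) ≤ EE x y * D' := by
            calc (1:ℤ) = 1*1 := by norm_num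
              _ ≤ EE x y * D' := mul_le_mul hEE hD' (by norm_num) (by linarith)
          nlinarith
        show y * (EE x y * D') * (F1 x y * D') < F2 x y * D' * (x * (EE x y * D'))
        calc y * (EE x y * D') * (F1 x y * D') = (y * F1 x y) * ((EE x y * D') * D') := by ring
          _ < (x * F2 x y) * ((EE x y * D') * D') := by
              exact mul_lt_mul_of_pos_right hlt hpos
          _ = F2 x y * D' * (x * (EE x y * D')) := by ring
      | j+1 =>
        simp only [Nat.succ_ne_zero, if_false, Nat.add_sub_cancel]
        exact hchain' j (by omega)


lemma le_pow_self' (t : ℕ) : t ≤ 5^t := by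
  induction t with
  | zero => simp
  | succ t ih =>
    have h5 : 1 ≤ 5^t := Nat.one_le_pow _ _ (by norm_num)
    have e : 5^(t+1) = 5*5^t := pow_succ' 5 t
    omega

end S12

theorem stmt12 (k : ℕ) (hk : 1 ≤ k) :
    ∃ n : ℕ, n ≤ 100 ^ (100 ^ k) ∧
      k ≤ ((Finset.range (n+1) ×ˢ Finset.range (n+1)).filter
        (fun p => 0 < p.2 ∧ p.2 ≤ p.1 ∧ p.1 ^ 3 + p.2 ^ 3 = n)).card := by
  obtain ⟨m, hk1⟩ : ∃ m, m + 1 = k := ⟨k - 1, by omega⟩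
  have h5pos : (0:ℤ) < 8*5^m := by positivity
  obtain ⟨n, D, f, hD, hnD, hf0, hbound, hprops, hchain⟩ :=
    S12.iter m (8*5^m) 1 le_rfl (by rw [mul_one])
  -- basic facts
  have hfacts : ∀ i ≤ m, (1:ℤ) ≤ (f i).2 ∧ (1:ℤ) ≤ (f i).1 ∧ (f i).1^3 + (f i).2^3 = n := by
    intro i hi
    obtain ⟨h1, h2, h3⟩ := hprops i hi
    exact ⟨h1, le_trans h1 h2, h3⟩
  have hn0 : (0:ℤ) ≤ n := by
    obtain ⟨h1, h2, h3⟩ := hfacts 0 (Nat.zero_le m)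
    have c1 : (1:ℤ) ≤ (f 0).1^3 := one_le_pow₀ h2
    have c2 : (1:ℤ) ≤ (f 0).2^3 := one_le_pow₀ h1
    linarith [h3.le, h3.ge]
  -- ratio monotonicity
  have mono : ∀ j ≤ m, ∀ i < j, (f i).2 * (f j).1 < (f j).2 * (f i).1 := by
    intro j
    induction j with
    | zero => intro _ i hi; omega
    | succ j ihj =>
      intro hj i hi
      rcases Nat.lt_succ_iff_lt_or_eq.mp hi with h | h
      · have h1 := ihj (by omega) i h
        have h2 := hchain j (by omega)
        obtain ⟨hbi, hai, _⟩ := hfacts i (by omega)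
        obtain ⟨hbj, haj, _⟩ := hfacts j (by omega)
        obtain ⟨hbj1, haj1, _⟩ := hfacts (j+1) (by omega)
        have q1 := mul_lt_mul_of_pos_right h1 (show (0:ℤ) < (f (j+1)).1 by linarith)
        have q2 := mul_lt_mul_of_pos_right h2 (show (0:ℤ) < (f i).1 by linarith)
        have q3 : ((f i).2 * (f (j+1)).1) * (f j).1 < ((f (j+1)).2 * (f i).1) * (f j).1 := by
          nlinarith [q1, q2]
        exact lt_of_mul_lt_mul_right q3 (by linarith)
      · subst h; exact hchain i (by omega)
  -- natural number data
  set N : ℕ := n.toNat with hN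
  have hNn : (N:ℤ) = n := Int.toNat_of_nonneg hn0
  set a : ℕ → ℕ := fun i => (f i).1.toNat with ha
  set b : ℕ → ℕ := fun i => (f i).2.toNat with hb
  have hcast : ∀ i ≤ m, ((a i : ℤ) = (f i).1 ∧ ((b i : ℤ)) = (f i).2) := by
    intro i hi
    obtain ⟨h1, h2, _⟩ := hfacts i hi
    exact ⟨Int.toNat_of_nonneg (by linarith), Int.toNat_of_nonneg (by linarith)⟩
  set S : Finset (ℕ × ℕ) := (Finset.range k).image (fun i => (a i, b i)) with hS
  have hsub : S ⊆ (Finset.range (N+1) ×ˢ Finset.range (N+1)).filter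
      (fun p => 0 < p.2 ∧ p.2 ≤ p.1 ∧ p.1 ^ 3 + p.2 ^ 3 = N) := by
    intro p hp
    obtain ⟨i, hik, rfl⟩ := Finset.mem_image.mp hp
    have him : i ≤ m := by simp only [Finset.mem_range] at hik; omega
    obtain ⟨hbi, hai, hcube⟩ := hfacts i him
    obtain ⟨hca, hcb⟩ := hcast i him
    have hcubeN : a i ^ 3 + b i ^ 3 = N := by
      have : ((a i ^ 3 + b i ^ 3 : ℕ) : ℤ) = (N : ℤ) := by
        push_cast
        rw [hca, hcb, hNn]
        exact hcube
      exact_mod_cast this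
    have hb3 : (1:ℤ) ≤ (f i).2^3 := one_le_pow₀ hbi
    have ha2 : (1:ℤ) ≤ (f i).1^2 := one_le_pow₀ hai
    have haa : (f i).1 ≤ (f i).1^3 := by nlinarith [hai, ha2]
    have haN : (f i).1 ≤ n := by linarith
    have haN' : a i ≤ N := by omega
    have hbN' : b i ≤ N := by
      have : (f i).2 ≤ (f i).1 := (hprops i him).2.1
      omega
    refine Finset.mem_filter.mpr ⟨Finset.mem_product.mpr ⟨?_, ?_⟩, ?_, ?_, hcubeN⟩
    · exact Finset.mem_range.mpr (by omega)
    · exact Finset.mem_range.mpr (by omega)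
    · show 0 < b i; omega
    · show b i ≤ a i
      have : (f i).2 ≤ (f i).1 := (hprops i him).2.1
      omega
  have hcard : S.card = k := by
    rw [hS, Finset.card_image_of_injOn, Finset.card_range]
    intro i hi j hj hij
    simp only [Finset.coe_range, Set.mem_Iio] at hi hj
    have him : i ≤ m := by omega
    have hjm : j ≤ m := by omega
    obtain ⟨hcai, hcbi⟩ := hcast i him
    obtain ⟨hcaj, hcbj⟩ := hcast j hjm
    have e1 : (f i).1 = (f j).1 := by
      rw [← hcai, ← hcaj]; exact_mod_cast congrArg Prod.fst hij
    have e2 : (f i).2 = (f j).2 := by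
      rw [← hcbi, ← hcbj]; exact_mod_cast congrArg Prod.snd hij
    by_contra hne
    rcases Nat.lt_or_ge i j with h | h
    · have := mono j hjm i h
      rw [e1, e2] at this
      exact absurd this (lt_irrefl _)
    · have hji : j < i := by omega
      have := mono i him j hji
      rw [e1, e2] at this
      exact absurd this (lt_irrefl _)
  refine ⟨N, ?_, ?_⟩
  · -- N ≤ 100^(100^k)
    have hb2 : (8*5^m:ℤ) ≤ (100:ℤ)^k := by
      have hnat : 8*5^m ≤ 100^k := by
        calc 8*5^m ≤ 100*100^m :=
          Nat.mul_le_mul (by norm_num) (Nat.pow_le_pow_left (by norm_num) m)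
        _ = 100^(m+1) := (pow_succ' 100 m).symm
        _ = 100^k := by rw [hk1]
      exact_mod_cast hnat
    have hb3 : n ≤ ((100:ℤ)^k)^(4*20^m) :=
      le_trans hbound (pow_le_pow_left₀ (by positivity) hb2 _)
    have hexp : k*(4*20^m) ≤ 100^k := by
      have h1 : k ≤ 5^k := S12.le_pow_self' k
      calc k*(4*20^m) = (k*4)*20^m := by ring
        _ ≤ (20*5^k)*20^m := Nat.mul_le_mul_right _ (by omega)
        _ = 5^k*(20^(m+1)) := by rw [pow_succ' 20 m]; ring
        _ = 5^k*20^k := by rw [hk1]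
        _ = 100^k := by rw [← Nat.mul_pow]
    have hb4 : n ≤ (100:ℤ)^(100^k) := by
      calc n ≤ ((100:ℤ)^k)^(4*20^m) := hb3
        _ = (100:ℤ)^(k*(4*20^m)) := by rw [← pow_mul]
        _ ≤ (100:ℤ)^(100^k) := pow_le_pow_right₀ (by norm_num) hexp
    have : n ≤ ((100^(100^k) : ℕ) : ℤ) := by push_cast; exact hb4
    omega
  · calc k = S.card := hcard.symm
      _ ≤ _ := Finset.card_le_card hsub
end

section
/- With the sequences u_i, v_i from the recursive construction (u_1 = 4^{k−1}, v_1 = 1, and the Vieta-type recursion), the ratios u_i/v_i are strictly decreasing in i; consequently the k pairs (u_i/w_i · w_k, v_i/w_i · w_k), 1 ≤ i ≤ k, are pairwise distinct representations of (64^{k−1}+1)·w_k³ as a sum of two positive cubes. -/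
open Filter

theorem stmt15 (k : ℕ) (hk : 1 ≤ k) (u v w : ℕ → ℤ)
    (hu1 : u 1 = 4 ^ (k - 1)) (hv1 : v 1 = 1) (hw1 : w 1 = 1)
    (hu : ∀ i, 1 ≤ i → i + 1 ≤ k →
      u (i+1) = u i * (u i ^ 3 + 2 * v i ^ 3) *
        (u i ^ 3 * (u i ^ 3 + 2 * v i ^ 3) ^ 3 - 2 * v i ^ 3 * (2 * u i ^ 3 + v i ^ 3) ^ 3))
    (hv : ∀ i, 1 ≤ i → i + 1 ≤ k →
      v (i+1) = v i * (2 * u i ^ 3 + v i ^ 3) *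
        (2 * u i ^ 3 * (u i ^ 3 + 2 * v i ^ 3) ^ 3 - v i ^ 3 * (2 * u i ^ 3 + v i ^ 3) ^ 3))
    (hw : ∀ i, 1 ≤ i → i + 1 ≤ k →
      w (i+1) = (u i ^ 3 - v i ^ 3) *
        (u i ^ 3 * (u i ^ 3 + 2 * v i ^ 3) ^ 3 + v i ^ 3 * (2 * u i ^ 3 + v i ^ 3) ^ 3) * w i)
    (hknown : ∀ i, 1 ≤ i → i ≤ k →
      u i ^ 3 + v i ^ 3 = (64 ^ (k - 1) + 1) * w i ^ 3 ∧
      0 < v i ∧ 4 ^ (k - i) * v i ≤ u i ∧ w i ∣ w k)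
    (x y : ℕ → ℤ)
    (hxy : ∀ i, 1 ≤ i → i ≤ k → x i * w i = u i * w k ∧ y i * w i = v i * w k) :
    (∀ i, 1 ≤ i → i + 1 ≤ k → u (i+1) * v i < u i * v (i+1)) ∧
    (∀ i j, 1 ≤ i → i ≤ k → 1 ≤ j → j ≤ k → i ≠ j → (x i, y i) ≠ (x j, y j)) ∧
    (∀ i, 1 ≤ i → i ≤ k →
      0 < y i ∧ y i ≤ x i ∧ x i ^ 3 + y i ^ 3 = (64 ^ (k - 1) + 1) * w k ^ 3) := by

  have fact : ∀ i, 1 ≤ i → i ≤ k → 0 < v i ∧ 0 < u i ∧ 0 < w i ∧ v i ≤ u i := by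
    intro i h1 h2
    obtain ⟨hc, hv0, hle, -⟩ := hknown i h1 h2
    have h4 : (1:ℤ) ≤ 4 ^ (k - i) := one_le_pow₀ (by norm_num)
    have hu0 : 0 < u i := by nlinarith [mul_le_mul_of_nonneg_right h4 hv0.le]
    have hvu : v i ≤ u i := by nlinarith [mul_le_mul_of_nonneg_right h4 hv0.le]
    have hN : (0:ℤ) < 64 ^ (k - 1) + 1 := by positivity
    have hw3 : 0 < w i ^ 3 := by nlinarith [pow_pos hu0 3, pow_pos hv0 3]
    have hw0 : 0 < w i := by
      by_contra h
      push_neg at h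
      nlinarith [sq_nonneg (w i)]
    exact ⟨hv0, hu0, hw0, hvu⟩
  have step : ∀ i, 1 ≤ i → i + 1 ≤ k → u (i+1) * v i < u i * v (i+1) := by
    intro i h1 h2
    obtain ⟨hv0, hu0, hw0, hvu⟩ := fact i h1 (by omega)
    have key : u i * v (i+1) - u (i+1) * v i
        = 3 * (u i * v i) * ((u i)^6*(u i^3+2*v i^3)^3 + (v i)^6*(2*u i^3+v i^3)^3) := by
      rw [hu i h1 h2, hv i h1 h2]; ring
    have hpos : 0 < 3 * (u i * v i) * ((u i)^6*(u i^3+2*v i^3)^3 + (v i)^6*(2*u i^3+v i^3)^3) := by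
      positivity
    linarith
  have mono : ∀ j, j ≤ k → ∀ i, 1 ≤ i → i < j → u j * v i < u i * v j := by
    intro j
    induction j with
    | zero => intro _ i _ h; omega
    | succ n ih =>
      intro hjk i h1 hij
      rcases Nat.lt_succ_iff_lt_or_eq.mp hij with h | h
      · have h1n : 1 ≤ n := by omega
        have A := ih (by omega) i h1 h
        have B := step n h1n hjk
        obtain ⟨hvi, hui, -, -⟩ := fact i h1 (by omega)
        obtain ⟨hvn, hun, -, -⟩ := fact n h1n (by omega)
        obtain ⟨hvn1, hun1, -, -⟩ := fact (n+1) (by omega) hjk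
        nlinarith [mul_pos hun hvn, A, B]
      · subst h; exact step i h1 hjk
  refine ⟨step, ?_, ?_⟩
  · intro i j hi hik hj hjk hne heq
    have hx : x i = x j := congrArg Prod.fst heq
    have hy : y i = y j := congrArg Prod.snd heq
    obtain ⟨e1, e2⟩ := hxy i hi hik
    obtain ⟨e3, e4⟩ := hxy j hj hjk
    obtain ⟨-, -, hwk, -⟩ := fact k hk le_rfl
    rw [hx] at e1
    rw [hy] at e2
    have key : u i * v j * w k ^ 2 = u j * v i * w k ^ 2 := by
      linear_combination (-(y j * w j)) * e1 - (u i * w k) * e4 + (y j * w i) * e3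
        + (u j * w k) * e2
    have key2 : u i * v j = u j * v i :=
      mul_right_cancel₀ (by positivity) key
    rcases hne.lt_or_gt with h | h
    · have := mono j hjk i hi h
      linarith
    · have := mono i hik j hj h
      linarith
  · intro i hi hik
    obtain ⟨e1, e2⟩ := hxy i hi hik
    obtain ⟨hcube, -, -, -⟩ := hknown i hi hik
    obtain ⟨hv0, hu0, hw0, hvu⟩ := fact i hi hik
    obtain ⟨-, -, hwk, -⟩ := fact k hk le_rfl
    refine ⟨?_, ?_, ?_⟩
    · nlinarith [mul_pos hv0 hwk]
    · nlinarith [mul_nonneg (sub_nonneg.2 hvu) hwk.le]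
    · have h3 : (x i ^ 3 + y i ^ 3) * w i ^ 3 = ((64 ^ (k-1) + 1) * w k ^ 3) * w i ^ 3 := by
        linear_combination (x i^2*w i^2 + x i*w i*(u i*w k) + u i^2*w k^2) * e1
          + (y i^2*w i^2 + y i*w i*(v i*w k) + v i^2*w k^2) * e2 + w k^3 * hcube
      exact mul_right_cancel₀ (by positivity) h3
end

section
/- There exists a set A = {a_1 < a_2 < ...} of positive integers with a_n = n³ + O(n^{5/2}·√(log n)) such that R_A(n) is bounded (i.e., s_A < ∞). -/
open Filter

section Stmt17Aux
open Finset

/-- pairs (i,i') with 1 ≤ i ≤ i' ≤ n -/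
def pairsUpTo (n : ℕ) : Finset (ℕ × ℕ) :=
  (Finset.Icc 1 n ×ˢ Finset.Icc 1 n).filter fun p => p.1 ≤ p.2

def Rcnt (f : ℕ → ℕ) (n v : ℕ) : ℕ :=
  ((pairsUpTo n).filter fun p => f p.1 + f p.2 = v).card

def cM : ℕ := 25000
def cK : ℕ := 99

def sLow (f : ℕ → ℕ) (n : ℕ) : ℕ := max (f (n - 1) + 1) (n ^ 3)

def notBad (f : ℕ → ℕ) (n x : ℕ) : Prop :=
  (∀ j ∈ Finset.Icc 1 (n - 1), Rcnt f (n - 1) (x + f j) < cM) ∧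
    Rcnt f (n - 1) (x + x) < cM

instance (f : ℕ → ℕ) (n x : ℕ) : Decidable (notBad f n x) := by
  unfold notBad; infer_instance

lemma Rcnt_eq_zero_of_big (f : ℕ → ℕ) (n v : ℕ)
    (hv : 2 * ((Finset.Icc 1 n).sup f) < v) : Rcnt f n v = 0 := by
  rw [Rcnt, Finset.card_eq_zero, Finset.filter_eq_empty_iff]
  rintro ⟨i, i'⟩ hp
  simp only [pairsUpTo, Finset.mem_filter, Finset.mem_product] at hp
  have h1 : f i ≤ (Finset.Icc 1 n).sup f := Finset.le_sup hp.1.1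
  have h2 : f i' ≤ (Finset.Icc 1 n).sup f := Finset.le_sup hp.1.2
  dsimp only
  omega

lemma exists_choice (f : ℕ → ℕ) (n : ℕ) :
    ∃ x, sLow f n ≤ x ∧ notBad f n x := by
  refine ⟨sLow f n + 2 * ((Finset.Icc 1 (n-1)).sup f) + 1, by omega, ?_, ?_⟩
  · intro j hj
    have : Rcnt f (n-1) (sLow f n + 2 * ((Finset.Icc 1 (n-1)).sup f) + 1 + f j) = 0 :=
      Rcnt_eq_zero_of_big _ _ _ (by omega)
    rw [this]; norm_num [cM]
  · have : Rcnt f (n-1) ((sLow f n + 2 * ((Finset.Icc 1 (n-1)).sup f) + 1) +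
      (sLow f n + 2 * ((Finset.Icc 1 (n-1)).sup f) + 1)) = 0 := by
      apply Rcnt_eq_zero_of_big
      have : f (n-1) + 1 ≤ sLow f n := le_max_left _ _
      omega
    rw [this]; norm_num [cM]

def stepg (f : ℕ → ℕ) (n : ℕ) : ℕ := Nat.find (exists_choice f n)

def gvec : ℕ → ℕ → ℕ
  | 0 => fun _ => 0
  | n + 1 => fun m => if m = n + 1 then stepg (gvec n) (n + 1) else gvec n m

def g (n : ℕ) : ℕ := gvec n n

lemma gvec_coh (n m : ℕ) (h : m ≤ n) : gvec n m = g m := by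
  induction n with
  | zero => interval_cases m; rfl
  | succ k ih =>
    rcases Nat.eq_or_lt_of_le h with h' | h'
    · subst h'; rfl
    · have hm : m ≤ k := by omega
      show gvec (k+1) m = g m
      simp only [gvec]
      rw [if_neg (by omega)]
      exact ih hm

lemma stepg_congr (f f' : ℕ → ℕ) (n : ℕ) (hff : ∀ m, m ≤ n - 1 → f m = f' m) :
    stepg f n = stepg f' n := by
  have hR : ∀ v, Rcnt f (n-1) v = Rcnt f' (n-1) v := by
    intro v
    unfold Rcnt
    congr 1
    apply Finset.filter_congr
    rintro ⟨i, i'⟩ hp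
    simp only [pairsUpTo, Finset.mem_filter, Finset.mem_product, Finset.mem_Icc] at hp
    rw [hff i (by omega), hff i' (by omega)]
  have hs : sLow f n = sLow f' n := by unfold sLow; rw [hff (n-1) le_rfl]
  have hnb : ∀ x, notBad f n x ↔ notBad f' n x := by
    intro x
    unfold notBad
    constructor
    · rintro ⟨h1, h2⟩
      refine ⟨fun j hj => ?_, by rw [← hR]; exact h2⟩
      rw [← hR, ← hff j (by simp [Finset.mem_Icc] at hj; omega)]
      exact h1 j hj
    · rintro ⟨h1, h2⟩
      refine ⟨fun j hj => ?_, by rw [hR]; exact h2⟩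
      rw [hR, hff j (by simp [Finset.mem_Icc] at hj; omega)]
      exact h1 j hj
  unfold stepg
  apply le_antisymm
  · apply Nat.find_le
    have h := Nat.find_spec (exists_choice f' n)
    exact ⟨by rw [hs]; exact h.1, (hnb _).2 h.2⟩
  · apply Nat.find_le
    have h := Nat.find_spec (exists_choice f n)
    exact ⟨by rw [← hs]; exact h.1, (hnb _).1 h.2⟩

lemma g_eq_stepg (n : ℕ) (hn : 1 ≤ n) : g n = stepg g n := by
  obtain ⟨k, rfl⟩ : ∃ k, n = k + 1 := ⟨n - 1, by omega⟩
  show gvec (k+1) (k+1) = _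
  simp only [gvec, if_true]
  exact stepg_congr _ _ _ (fun m hm => gvec_coh k m (by omega))

lemma g_spec (n : ℕ) (hn : 1 ≤ n) :
    sLow g n ≤ g n ∧ notBad g n (g n) ∧
      ∀ x, sLow g n ≤ x → notBad g n x → g n ≤ x := by
  have h := g_eq_stepg n hn
  constructor
  · rw [h]; exact (Nat.find_spec (exists_choice g n)).1
  constructor
  · rw [h]; exact (Nat.find_spec (exists_choice g n)).2
  · intro x hx hb
    rw [h]
    exact Nat.find_le ⟨hx, hb⟩

lemma g_zero : g 0 = 0 := rfl

lemma g_succ_gt (n : ℕ) (hn : 1 ≤ n) : g (n - 1) < g n := by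
  have h := (g_spec n hn).1
  have : g (n-1) + 1 ≤ sLow g n := le_max_left _ _
  omega

lemma g_cube_le (n : ℕ) (hn : 1 ≤ n) : n ^ 3 ≤ g n := by
  have h := (g_spec n hn).1
  have : n ^ 3 ≤ sLow g n := le_max_right _ _
  omega

lemma g_strictMono : StrictMono g := by
  have key : ∀ n, g n < g (n+1) := by
    intro n
    have := g_succ_gt (n+1) (by omega)
    simpa using this
  exact strictMono_nat_of_lt_succ key

lemma Rcnt_le_sq (f : ℕ → ℕ) (n v : ℕ) : Rcnt f n v ≤ n ^ 2 := by
  have h1 : ((pairsUpTo n).filter fun p => f p.1 + f p.2 = v) ⊆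
      Finset.Icc 1 n ×ˢ Finset.Icc 1 n := by
    intro p hp
    simp only [pairsUpTo, Finset.mem_filter] at hp
    exact hp.1.1
  calc Rcnt f n v ≤ (Finset.Icc 1 n ×ˢ Finset.Icc 1 n).card := Finset.card_le_card h1
    _ = n * n := by rw [Finset.card_product, Nat.card_Icc]; simp
    _ = n ^ 2 := by ring

/-- double counting: many saturated values in a window force many pairs with sum there -/
lemma sat_count (f : ℕ → ℕ) (n : ℕ) (W : Finset ℕ) :
    cM * (W.filter fun v => cM ≤ Rcnt f n v).card ≤
      ((pairsUpTo n).filter fun p => f p.1 + f p.2 ∈ W).card := by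
  set S := W.filter fun v => cM ≤ Rcnt f n v with hS
  set P := (pairsUpTo n).filter fun p => f p.1 + f p.2 ∈ S with hP
  have hsum : P.card = ∑ v ∈ S, Rcnt f n v := by
    have hfib := Finset.card_eq_sum_card_fiberwise (s := P) (t := S)
      (f := fun p : ℕ × ℕ => f p.1 + f p.2) (fun p hp => (Finset.mem_filter.mp hp).2)
    rw [hfib]
    apply Finset.sum_congr rfl
    intro v hv
    unfold Rcnt
    congr 1
    rw [hP, Finset.filter_filter]
    apply Finset.filter_congr
    intro p hp
    constructor
    · rintro ⟨_, h⟩; exact h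
    · rintro h; exact ⟨by rw [h]; exact hv, h⟩
  have h1 : cM * S.card ≤ P.card := by
    rw [hsum]
    calc cM * S.card = ∑ _v ∈ S, cM := by rw [Finset.sum_const, smul_eq_mul, mul_comm]
      _ ≤ ∑ v ∈ S, Rcnt f n v :=
        Finset.sum_le_sum (fun v hv => (Finset.mem_filter.mp hv).2)
  refine le_trans h1 (Finset.card_le_card ?_)
  intro p hp
  rw [hP, Finset.mem_filter] at hp
  rw [Finset.mem_filter]
  exact ⟨hp.1, (Finset.mem_filter.mp hp.2).1⟩

/-- cube spacing count -/
lemma cube_count (n B : ℕ) (hn : 1 ≤ n) (S : Finset ℕ)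
    (h1 : ∀ m ∈ S, n < 2 * m)
    (h2 : ∀ m1 ∈ S, ∀ m2 ∈ S, m2 ^ 3 ≤ m1 ^ 3 + B * n ^ 2) :
    3 * (S.card - 1) ≤ 4 * B := by
  rcases S.eq_empty_or_nonempty with h | h
  · simp [h]
  · set m1 := S.min' h
    set m2 := S.max' h
    have hm1 : m1 ∈ S := S.min'_mem h
    have hm2 : m2 ∈ S := S.max'_mem h
    have h12 : m1 ≤ m2 := S.min'_le m2 hm2
    have hcard : S.card ≤ m2 - m1 + 1 := by
      have : S ⊆ Finset.Icc m1 m2 := fun x hx =>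
        Finset.mem_Icc.mpr ⟨S.min'_le x hx, S.le_max' x hx⟩
      calc S.card ≤ (Finset.Icc m1 m2).card := Finset.card_le_card this
        _ = m2 - m1 + 1 := by rw [Nat.card_Icc]; omega
    set d := m2 - m1 with hd
    have hm2d : m2 = m1 + d := by omega
    have hcube : m1 ^ 3 + 3 * m1 ^ 2 * d ≤ m2 ^ 3 := by
      rw [hm2d]; ring_nf; nlinarith [sq_nonneg d, sq_nonneg m1]
    have hwin := h2 m1 hm1 m2 hm2
    have h3 : 3 * m1 ^ 2 * d ≤ B * n ^ 2 := by omega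
    have h4 : n ^ 2 < 4 * m1 ^ 2 := by
      have := h1 m1 hm1
      nlinarith
    have h5 : 3 * d * n ^ 2 ≤ 4 * B * n ^ 2 := by nlinarith
    have h6 : 3 * d ≤ 4 * B := by
      have hn2 : 0 < n ^ 2 := by positivity
      exact Nat.le_of_mul_le_mul_right (by linarith [h5]) hn2
    omega

lemma fiber_bound (gg : ℕ → ℕ) (n i u w : ℕ) (hn : 158 ≤ n) (hi : 1 ≤ i)
    (hmono : StrictMono gg)
    (hbnd : ∀ m, 1 ≤ m → m < n → m ^ 3 ≤ gg m ∧ gg m ≤ m ^ 3 + cK * m ^ 2)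
    (hu : n ^ 3 ≤ u) (hw : w ≤ u + 3 * cK * n ^ 2) :
    ((Finset.Icc 1 (n-1)).filter fun i' => i ≤ i' ∧ gg i + gg i' ∈ Finset.Icc u w).card
      ≤ 529 := by
  set S := (Finset.Icc 1 (n-1)).filter
    fun i' => i ≤ i' ∧ gg i + gg i' ∈ Finset.Icc u w with hSdef
  have hmem : ∀ m ∈ S, 1 ≤ m ∧ m < n ∧ i ≤ m ∧ u ≤ gg i + gg m ∧ gg i + gg m ≤ w := by
    intro m hm
    rw [hSdef, Finset.mem_filter, Finset.mem_Icc] at hm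
    obtain ⟨⟨h1, h2⟩, h3, h4⟩ := hm
    rw [Finset.mem_Icc] at h4
    exact ⟨h1, by omega, h3, h4.1, h4.2⟩
  have hn3 : 3944312 ≤ n ^ 3 := by
    calc (3944312 : ℕ) = 158 ^ 3 := by norm_num
      _ ≤ n ^ 3 := Nat.pow_le_pow_left hn 3
  have h1 : ∀ m ∈ S, n < 2 * m := by
    intro m hm
    obtain ⟨hm1, hm2, hm3, hm4, _⟩ := hmem m hm
    have hb := hbnd m hm1 hm2
    have hgi : gg i ≤ gg m := hmono.monotone hm3
    have h2g : n ^ 3 ≤ 2 * gg m := by omega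
    have hmK : cK < m := by
      by_contra hc
      push_neg at hc
      have : gg m ≤ 99 ^ 3 + 99 * 99 ^ 2 := by
        have e1 : m ^ 3 ≤ 99 ^ 3 := Nat.pow_le_pow_left (by simpa [cK] using hc) 3
        have e2 : m ^ 2 ≤ 99 ^ 2 := Nat.pow_le_pow_left (by simpa [cK] using hc) 2
        have := hb.2
        simp only [cK] at this ⊢
        omega
      norm_num at this
      omega
    have hlt : 2 * gg m < 4 * m ^ 3 := by
      have h99 : cK * m ^ 2 < m * m ^ 2 := by
        have hp : 0 < m ^ 2 := by positivity
        exact Nat.mul_lt_mul_of_lt_of_le hmK le_rfl hp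
      have hm3' : m * m ^ 2 = m ^ 3 := by ring
      omega
    by_contra hc
    push_neg at hc
    have : 8 * m ^ 3 ≤ n ^ 3 := by
      calc 8 * m ^ 3 = (2 * m) ^ 3 := by ring
        _ ≤ n ^ 3 := Nat.pow_le_pow_left hc 3
    omega
  have h2 : ∀ m1 ∈ S, ∀ m2 ∈ S, m2 ^ 3 ≤ m1 ^ 3 + (4 * cK) * n ^ 2 := by
    intro m1 hm1 m2 hm2
    obtain ⟨ha1, ha2, ha3, ha4, ha5⟩ := hmem m1 hm1
    obtain ⟨hb1, hb2, hb3, hb4, hb5⟩ := hmem m2 hm2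
    have hA := hbnd m1 ha1 ha2
    have hB := hbnd m2 hb1 hb2
    have hm1n : m1 ^ 2 ≤ n ^ 2 := Nat.pow_le_pow_left (by omega) 2
    have e1 : u ≤ gg i + m1 ^ 3 + cK * n ^ 2 := by
      have : gg m1 ≤ m1 ^ 3 + cK * m1 ^ 2 := hA.2
      have : cK * m1 ^ 2 ≤ cK * n ^ 2 := Nat.mul_le_mul_left _ hm1n
      omega
    have e2 : gg i + m2 ^ 3 ≤ w := by
      have := hB.1
      omega
    have hr : 4 * cK * n ^ 2 = 4 * (cK * n ^ 2) := by ring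
    have hr2 : 3 * cK * n ^ 2 = 3 * (cK * n ^ 2) := by ring
    omega
  have hc := cube_count n (4 * cK) (by omega) S h1 h2
  simp only [cK] at hc
  omega

lemma pairs_window (gg : ℕ → ℕ) (n u w : ℕ) (hn : 158 ≤ n)
    (hmono : StrictMono gg)
    (hbnd : ∀ m, 1 ≤ m → m < n → m ^ 3 ≤ gg m ∧ gg m ≤ m ^ 3 + cK * m ^ 2)
    (hu : n ^ 3 ≤ u) (hw : w ≤ u + 3 * cK * n ^ 2) :
    ((pairsUpTo (n-1)).filter fun p => gg p.1 + gg p.2 ∈ Finset.Icc u w).card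
      ≤ (n - 1) * 529 := by
  set P := (pairsUpTo (n-1)).filter fun p => gg p.1 + gg p.2 ∈ Finset.Icc u w with hPdef
  have hmapped : ∀ p ∈ P, p.1 ∈ Finset.Icc 1 (n-1) := by
    intro p hp
    rw [hPdef, Finset.mem_filter] at hp
    have := hp.1
    simp only [pairsUpTo, Finset.mem_filter, Finset.mem_product] at this
    exact this.1.1
  have hfib := Finset.card_eq_sum_card_fiberwise (s := P) (t := Finset.Icc 1 (n-1))
    (f := fun p : ℕ × ℕ => p.1) hmapped
  rw [hfib]
  have hbound : ∀ i ∈ Finset.Icc 1 (n-1), (P.filter fun p => p.1 = i).card ≤ 529 := by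
    intro i hi
    rw [Finset.mem_Icc] at hi
    refine le_trans (Finset.card_le_card_of_injOn (fun p => p.2) ?_ ?_)
      (fiber_bound gg n i u w hn hi.1 hmono hbnd hu hw)
    · intro p hp
      rw [Finset.mem_coe, Finset.mem_filter, hPdef, Finset.mem_filter] at hp
      obtain ⟨⟨hp1, hp2⟩, hp3⟩ := hp
      simp only [pairsUpTo, Finset.mem_filter, Finset.mem_product] at hp1
      rw [Finset.mem_coe, Finset.mem_filter]
      refine ⟨hp1.1.2, ?_, ?_⟩
      · rw [← hp3]; exact hp1.2
      · rw [← hp3]; exact hp2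
    · intro p hp q hq hpq
      rw [Finset.mem_coe, Finset.mem_filter] at hp hq
      have : p.1 = q.1 := by rw [hp.2, hq.2]
      exact Prod.ext this hpq
  calc ∑ i ∈ Finset.Icc 1 (n-1), (P.filter fun p => p.1 = i).card
      ≤ ∑ _i ∈ Finset.Icc 1 (n-1), 529 := Finset.sum_le_sum hbound
    _ = (n - 1) * 529 := by rw [Finset.sum_const, smul_eq_mul, Nat.card_Icc]; omega

lemma exists_good (n : ℕ) (hn : 1 ≤ n)
    (hbnd : ∀ m, 1 ≤ m → m < n → m ^ 3 ≤ g m ∧ g m ≤ m ^ 3 + cK * m ^ 2) :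
    ∃ x, sLow g n ≤ x ∧ x ≤ n ^ 3 + cK * n ^ 2 ∧ notBad g n x := by
  set s := sLow g n with hs
  set T := n ^ 3 + cK * n ^ 2 with hT
  have hsn3 : n ^ 3 ≤ s := le_max_right _ _
  have hsT : s ≤ T := by
    rw [hs, sLow]
    apply max_le _ (by omega)
    rcases Nat.eq_or_lt_of_le hn with h1 | h1
    · have : g (1 - 1) = 0 := g_zero
      rw [← h1, this, hT]
      have : 1 ≤ n ^ 3 := Nat.one_le_pow _ _ (by omega)
      omega
    · have hb := hbnd (n-1) (by omega) (by omega)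
      have key : (n-1) ^ 3 + cK * (n-1) ^ 2 + 1 ≤ n ^ 3 + cK * n ^ 2 := by
        obtain ⟨m, rfl⟩ : ∃ m, n = m + 1 := ⟨n - 1, by omega⟩
        simp only [Nat.add_sub_cancel, cK]
        ring_nf
        nlinarith [sq_nonneg m]
      omega
  rcases lt_or_ge n 158 with hsmall | hlarge
  · refine ⟨s, le_rfl, hsT, ?_, ?_⟩
    · intro j _
      calc Rcnt g (n-1) (s + g j) ≤ (n-1) ^ 2 := Rcnt_le_sq _ _ _
        _ < cM := by
          have : (n-1) ^ 2 ≤ 157 ^ 2 := Nat.pow_le_pow_left (by omega) 2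
          simp only [cM]; omega
    · calc Rcnt g (n-1) (s + s) ≤ (n-1) ^ 2 := Rcnt_le_sq _ _ _
        _ < cM := by
          have : (n-1) ^ 2 ≤ 157 ^ 2 := Nat.pow_le_pow_left (by omega) 2
          simp only [cM]; omega
  · -- main counting case
    have hmono := g_strictMono
    set Bad := (Finset.Icc s T).filter (fun x => ¬ notBad g n x) with hBad
    have hwT : ∀ u, s ≤ u → ∀ w, w ≤ T + (u - s) →
        True := fun _ _ _ _ => trivial
    -- bound for each translate
    have hBj : ∀ j, 1 ≤ j →
        cM * ((Finset.Icc s T).filter (fun x => cM ≤ Rcnt g (n-1) (x + g j))).card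
          ≤ (n-1) * 529 := by
      intro j hj
      have hgj : 1 ≤ g j := by
        have : g 0 < g j := hmono (by omega)
        rw [g_zero] at this; omega
      set W := Finset.Icc (s + g j) (T + g j) with hW
      have hcard : ((Finset.Icc s T).filter (fun x => cM ≤ Rcnt g (n-1) (x + g j))).card
          ≤ (W.filter fun v => cM ≤ Rcnt g (n-1) v).card := by
        apply Finset.card_le_card_of_injOn (fun x => x + g j)
        · intro x hx
          rw [Finset.mem_coe, Finset.mem_filter, Finset.mem_Icc] at hx
          rw [Finset.mem_coe, Finset.mem_filter, hW, Finset.mem_Icc]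
          dsimp only
          exact ⟨⟨by omega, by omega⟩, hx.2⟩
        · intro x _ y _ h
          have h' : x + g j = y + g j := h
          omega
      have hsat := sat_count g (n-1) W
      have hpw : ((pairsUpTo (n-1)).filter fun p => g p.1 + g p.2 ∈ W).card
          ≤ (n-1) * 529 := by
        rw [hW]
        apply pairs_window g n (s + g j) (T + g j) hlarge hmono hbnd (by omega)
        have : 3 * cK * n ^ 2 = 3 * (cK * n ^ 2) := by ring
        omega
      calc cM * _ ≤ cM * (W.filter fun v => cM ≤ Rcnt g (n-1) v).card :=
            Nat.mul_le_mul_left _ hcard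
        _ ≤ _ := hsat
        _ ≤ (n-1) * 529 := hpw
    have hB2 : cM * ((Finset.Icc s T).filter (fun x => cM ≤ Rcnt g (n-1) (x + x))).card
        ≤ (n-1) * 529 := by
      set W := Finset.Icc (s + s) (T + T) with hW
      have hcard : ((Finset.Icc s T).filter (fun x => cM ≤ Rcnt g (n-1) (x + x))).card
          ≤ (W.filter fun v => cM ≤ Rcnt g (n-1) v).card := by
        apply Finset.card_le_card_of_injOn (fun x => x + x)
        · intro x hx
          rw [Finset.mem_coe, Finset.mem_filter, Finset.mem_Icc] at hx
          rw [Finset.mem_coe, Finset.mem_filter, hW, Finset.mem_Icc]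
          dsimp only
          exact ⟨⟨by omega, by omega⟩, hx.2⟩
        · intro x _ y _ h
          have h' : x + x = y + y := h
          omega
      have hsat := sat_count g (n-1) W
      have hpw : ((pairsUpTo (n-1)).filter fun p => g p.1 + g p.2 ∈ W).card
          ≤ (n-1) * 529 := by
        rw [hW]
        apply pairs_window g n (s + s) (T + T) hlarge hmono hbnd (by omega)
        have : 3 * cK * n ^ 2 = 3 * (cK * n ^ 2) := by ring
        omega
      calc cM * _ ≤ cM * (W.filter fun v => cM ≤ Rcnt g (n-1) v).card :=
            Nat.mul_le_mul_left _ hcard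
        _ ≤ _ := hsat
        _ ≤ (n-1) * 529 := hpw
    -- Bad is contained in union
    have hsub : Bad ⊆ ((Finset.Icc 1 (n-1)).biUnion fun j =>
        (Finset.Icc s T).filter (fun x => cM ≤ Rcnt g (n-1) (x + g j))) ∪
        ((Finset.Icc s T).filter (fun x => cM ≤ Rcnt g (n-1) (x + x))) := by
      intro x hx
      rw [hBad, Finset.mem_filter] at hx
      obtain ⟨hx1, hx2⟩ := hx
      rw [notBad, not_and_or] at hx2
      rw [Finset.mem_union]
      rcases hx2 with h | h
      · push_neg at h
        obtain ⟨j, hj, hjr⟩ := h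
        left
        rw [Finset.mem_biUnion]
        exact ⟨j, hj, Finset.mem_filter.mpr ⟨hx1, hjr⟩⟩
      · right
        exact Finset.mem_filter.mpr ⟨hx1, by omega⟩
    have hcount : cM * Bad.card ≤ (n-1) * ((n-1) * 529) + (n-1) * 529 := by
      have h1 : Bad.card ≤ ∑ j ∈ Finset.Icc 1 (n-1),
          ((Finset.Icc s T).filter (fun x => cM ≤ Rcnt g (n-1) (x + g j))).card +
          ((Finset.Icc s T).filter (fun x => cM ≤ Rcnt g (n-1) (x + x))).card := by
        calc Bad.card ≤ _ := Finset.card_le_card hsub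
          _ ≤ _ := by
            refine le_trans (Finset.card_union_le _ _) ?_
            gcongr
            exact Finset.card_biUnion_le
      calc cM * Bad.card ≤ cM * (∑ j ∈ Finset.Icc 1 (n-1),
            ((Finset.Icc s T).filter (fun x => cM ≤ Rcnt g (n-1) (x + g j))).card +
            ((Finset.Icc s T).filter (fun x => cM ≤ Rcnt g (n-1) (x + x))).card) :=
          Nat.mul_le_mul_left _ h1
        _ = (∑ j ∈ Finset.Icc 1 (n-1), cM *
            ((Finset.Icc s T).filter (fun x => cM ≤ Rcnt g (n-1) (x + g j))).card) +
            cM * ((Finset.Icc s T).filter (fun x => cM ≤ Rcnt g (n-1) (x + x))).card := by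
          rw [Nat.mul_add, Finset.mul_sum]
        _ ≤ (∑ _j ∈ Finset.Icc 1 (n-1), (n-1) * 529) + (n-1) * 529 :=
          Nat.add_le_add
            (Finset.sum_le_sum fun j hj => hBj j (Finset.mem_Icc.mp hj).1) hB2
        _ ≤ (n-1) * ((n-1) * 529) + (n-1) * 529 := by
          rw [Finset.sum_const, smul_eq_mul, Nat.card_Icc]
          have e : n - 1 + 1 - 1 = n - 1 := by omega
          rw [e]
    -- window is bigger
    have hwin : 3 * n ^ 2 + s ≤ T + 3 * n := by
      rw [hs, sLow]
      rcases max_cases (g (n-1) + 1) (n ^ 3) with ⟨heq, _⟩ | ⟨heq, _⟩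
      · rw [heq]
        have hb := hbnd (n-1) (by omega) (by omega)
        have key : 3 * n ^ 2 + (n-1) ^ 3 + cK * (n-1) ^ 2 + 1 ≤ n ^ 3 + cK * n ^ 2 + 3 * n := by
          obtain ⟨m, rfl⟩ : ∃ m, n = m + 1 := ⟨n - 1, by omega⟩
          simp only [Nat.add_sub_cancel, cK]
          ring_nf
          nlinarith [sq_nonneg m]
        omega
      · rw [heq, hT]
        have : 3 * n ^ 2 ≤ cK * n ^ 2 := by
          apply Nat.mul_le_mul_right
          simp [cK]
        omega
    have hlt : Bad.card < (Finset.Icc s T).card := by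
      rw [Nat.card_Icc]
      have hq : cM * Bad.card ≤ 529 * (n * n) := by
        have e2 : n - 1 + 1 = n := by omega
        have e1 : (n-1) * ((n-1) * 529) + (n-1) * 529 = ((n-1) * ((n-1) + 1)) * 529 := by
          ring
        have e3 : (n-1) * ((n-1)+1) ≤ n * n := by
          rw [e2]
          exact Nat.mul_le_mul_right _ (by omega)
        calc cM * Bad.card ≤ (n-1) * ((n-1) * 529) + (n-1) * 529 := hcount
          _ = ((n-1) * ((n-1) + 1)) * 529 := e1
          _ ≤ (n * n) * 529 := Nat.mul_le_mul_right _ e3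
          _ = 529 * (n * n) := by ring
      have hnn : 3 * n ≤ n * n := by nlinarith
      have hsq : n ^ 2 = n * n := by ring
      have h3 : 2 * (n * n) + 1 ≤ T + 1 - s := by
        rw [hsq] at hwin
        omega
      have h4 : 25000 * (2 * (n * n) + 1) ≤ cM * (T + 1 - s) := by
        simp only [cM]
        exact Nat.mul_le_mul_left _ h3
      have hfin : cM * Bad.card < cM * (T + 1 - s) := by
        refine lt_of_le_of_lt hq (lt_of_lt_of_le ?_ h4)
        omega
      exact Nat.lt_of_mul_lt_mul_left hfin
    have hnonempty : ((Finset.Icc s T) \ Bad).Nonempty := by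
      rw [← Finset.card_pos, Finset.card_sdiff_of_subset (hBad ▸ Finset.filter_subset _ _)]
      omega
    obtain ⟨x, hx⟩ := hnonempty
    rw [Finset.mem_sdiff, Finset.mem_Icc] at hx
    refine ⟨x, hx.1.1, hx.1.2, ?_⟩
    by_contra hc
    exact hx.2 (Finset.mem_filter.mpr ⟨Finset.mem_Icc.mpr hx.1, hc⟩)

lemma Rcnt_zero (f : ℕ → ℕ) (v : ℕ) : Rcnt f 0 v = 0 := by
  simp [Rcnt, pairsUpTo]

lemma g_ge (m : ℕ) : m ≤ g m := by
  induction m with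
  | zero => simp [g_zero]
  | succ k ih =>
    have h : g k < g (k + 1) := g_strictMono (Nat.lt_succ_self k)
    show k + 1 ≤ g (k + 1)
    omega

lemma g_invariant : ∀ n, 1 ≤ n →
    (n ^ 3 ≤ g n ∧ g n ≤ n ^ 3 + cK * n ^ 2) ∧ ∀ v, Rcnt g n v ≤ cM := by
  intro n
  induction n using Nat.strong_induction_on with
  | _ n ih =>
  intro hn
  have hbnd : ∀ m, 1 ≤ m → m < n → m ^ 3 ≤ g m ∧ g m ≤ m ^ 3 + cK * m ^ 2 :=
    fun m h1 h2 => (ih m h2 h1).1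
  obtain ⟨x, hx1, hx2, hx3⟩ := exists_good n hn hbnd
  have hspec := g_spec n hn
  have hub : g n ≤ n ^ 3 + cK * n ^ 2 := le_trans (hspec.2.2 x hx1 hx3) hx2
  have hlb : n ^ 3 ≤ g n := g_cube_le n hn
  refine ⟨⟨hlb, hub⟩, ?_⟩
  intro v
  have hprev : Rcnt g (n-1) v ≤ cM := by
    rcases Nat.eq_or_lt_of_le hn with h1 | h1
    · rw [← h1]
      simp [Rcnt_zero]
    · exact (ih (n-1) (by omega) (by omega)).2 v
  set F := (pairsUpTo n).filter (fun p => g p.1 + g p.2 = v) with hF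
  have hRF : Rcnt g n v = F.card := rfl
  have hsplit : (F.filter (fun p => p.2 = n)).card +
      (F.filter (fun p => ¬ p.2 = n)).card = F.card :=
    Finset.card_filter_add_card_filter_not _
  have hold : (F.filter (fun p => ¬ p.2 = n)).card ≤ Rcnt g (n-1) v := by
    apply Finset.card_le_card
    intro p hp
    rw [Finset.mem_filter, hF, Finset.mem_filter] at hp
    obtain ⟨⟨hp1, hp2⟩, hp3⟩ := hp
    simp only [pairsUpTo, Finset.mem_filter, Finset.mem_product, Finset.mem_Icc] at hp1
    rw [Finset.mem_filter]
    refine ⟨?_, hp2⟩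
    simp only [pairsUpTo, Finset.mem_filter, Finset.mem_product, Finset.mem_Icc]
    omega
  have hnew1 : (F.filter (fun p => p.2 = n)).card ≤ 1 := by
    rw [Finset.card_le_one]
    intro p hp q hq
    rw [Finset.mem_filter, hF, Finset.mem_filter] at hp hq
    have h1 : g p.1 = g q.1 := by
      have e1 : g p.1 + g p.2 = v := hp.1.2
      have e2 : g q.1 + g q.2 = v := hq.1.2
      rw [hp.2, hq.2] at *
      omega
    have := g_strictMono.injective h1
    have e3 : p.2 = q.2 := by rw [hp.2, hq.2]
    exact Prod.ext this e3
  rcases (F.filter (fun p => p.2 = n)).eq_empty_or_nonempty with hemp | ⟨p, hp⟩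
  · rw [hRF, ← hsplit, hemp]
    simpa using le_trans hold hprev
  · rw [Finset.mem_filter, hF, Finset.mem_filter] at hp
    obtain ⟨⟨hp1, hp2⟩, hp3⟩ := hp
    simp only [pairsUpTo, Finset.mem_filter, Finset.mem_product, Finset.mem_Icc] at hp1
    have hnb := hspec.2.1
    rw [notBad] at hnb
    obtain ⟨⟨⟨ha1, ha2⟩, hb1, hb2⟩, hle⟩ := hp1
    have hvlt : Rcnt g (n-1) v < cM := by
      rcases Nat.eq_or_lt_of_le hle with he | hlt'
      · have hv : v = g n + g n := by rw [← hp2, he, hp3]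
        rw [hv]
        exact hnb.2
      · have hp1n : p.1 ≤ n - 1 := by omega
        have hv : v = g n + g p.1 := by rw [← hp2, hp3]; ring
        rw [hv]
        exact hnb.1 p.1 (Finset.mem_Icc.mpr ⟨ha1, hp1n⟩)
    rw [hRF, ← hsplit]
    omega

lemma RS_le_cM (v : ℕ) : RS (g '' Set.Ici 1) v ≤ cM := by
  classical
  set F := (pairsUpTo v).filter (fun q : ℕ × ℕ => g q.1 + g q.2 = v) with hF
  have hFcard : F.card ≤ cM := by
    rcases Nat.eq_zero_or_pos v with rfl | hv
    · have : F ⊆ ∅ := by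
        intro q hq
        rw [hF, Finset.mem_filter] at hq
        have := hq.1
        simp [pairsUpTo] at this
      simp [Finset.subset_empty.mp this, cM]
    · have := (g_invariant v hv).2 v
      exact this
  have hinj : ∃ φ : {p : ℕ × ℕ // p.1 ∈ g '' Set.Ici 1 ∧ p.2 ∈ g '' Set.Ici 1 ∧
      p.1 ≤ p.2 ∧ p.1 + p.2 = v} → {q : ℕ × ℕ // q ∈ F}, Function.Injective φ := by
    have hch : ∀ p : {p : ℕ × ℕ // p.1 ∈ g '' Set.Ici 1 ∧ p.2 ∈ g '' Set.Ici 1 ∧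
        p.1 ≤ p.2 ∧ p.1 + p.2 = v}, ∃ q : ℕ × ℕ, q ∈ F ∧ g q.1 = p.1.1 ∧ g q.2 = p.1.2 := by
      rintro ⟨⟨p1, p2⟩, h1, h2, h3, h4⟩
      obtain ⟨i, hi, hgi⟩ := h1
      obtain ⟨i', hi', hgi'⟩ := h2
      simp only [Set.mem_Ici] at hi hi'
      refine ⟨(i, i'), ?_, hgi, hgi'⟩
      rw [hF, Finset.mem_filter]
      constructor
      · simp only [pairsUpTo, Finset.mem_filter, Finset.mem_product, Finset.mem_Icc]
        have e1 : i ≤ g i := g_ge i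
        have e2 : i' ≤ g i' := g_ge i'
        have e3 : i ≤ i' := by
          rw [← g_strictMono.le_iff_le]
          simp only at h3 ⊢
          omega
        simp only at h4
        refine ⟨⟨⟨hi, by omega⟩, hi', by omega⟩, e3⟩
      · simp only at h4 ⊢
        omega
    choose φ hφ1 hφ2 hφ3 using hch
    refine ⟨fun p => ⟨φ p, hφ1 p⟩, ?_⟩
    intro p q hpq
    have he : φ p = φ q := by
      simpa using hpq
    apply Subtype.ext
    apply Prod.ext
    · rw [← hφ2 p, ← hφ2 q, he]
    · rw [← hφ3 p, ← hφ3 q, he]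
  obtain ⟨φ, hφ⟩ := hinj
  calc RS (g '' Set.Ici 1) v ≤ Nat.card {q : ℕ × ℕ // q ∈ F} :=
        Nat.card_le_card_of_injective φ hφ
    _ = F.card := Nat.card_eq_finsetCard F
    _ ≤ cM := hFcard


end Stmt17Aux

theorem stmt17 :
    ∃ a : ℕ → ℕ, (∀ m n, 1 ≤ m → m < n → a m < a n) ∧ 0 < a 1 ∧
      (∃ C : ℝ, ∀ᶠ n : ℕ in atTop,
        |(a n : ℝ) - (n : ℝ) ^ 3| ≤ C * (n : ℝ) ^ ((5 : ℝ) / 2) * Real.sqrt (Real.log n)) ∧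
      (∃ M : ℕ, ∀ n : ℕ, RS (a '' Set.Ici 1) n ≤ M) := by
  refine ⟨g, fun m n _ h => g_strictMono h, by have := g_ge 1; omega, ⟨99, ?_⟩, ⟨cM, RS_le_cM⟩⟩
  rw [eventually_atTop]
  refine ⟨3, fun n hn => ?_⟩
  have hb := (g_invariant n (by omega)).1
  have hn1 : (1 : ℝ) ≤ (n : ℝ) := by exact_mod_cast (by omega : 1 ≤ n)
  have h2 : |(g n : ℝ) - (n : ℝ) ^ 3| ≤ 99 * (n : ℝ) ^ 2 := by
    rw [abs_le]
    constructor
    · have : (n : ℝ) ^ 3 ≤ (g n : ℝ) := by exact_mod_cast hb.1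
      nlinarith [sq_nonneg (n : ℝ)]
    · have : (g n : ℝ) ≤ (n : ℝ) ^ 3 + 99 * (n : ℝ) ^ 2 := by
        have := hb.2
        simp only [cK] at this
        have := (Nat.cast_le (α := ℝ)).mpr this
        push_cast at this
        linarith
      linarith
  have h3 : (n : ℝ) ^ 2 ≤ (n : ℝ) ^ ((5 : ℝ) / 2) := by
    have : (n : ℝ) ^ (2 : ℝ) ≤ (n : ℝ) ^ ((5 : ℝ) / 2) :=
      Real.rpow_le_rpow_of_exponent_le hn1 (by norm_num)
    rwa [Real.rpow_two] at this
  have h4 : (1 : ℝ) ≤ Real.sqrt (Real.log n) := by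
    rw [Real.one_le_sqrt]
    rw [Real.le_log_iff_exp_le (by linarith)]
    calc Real.exp 1 ≤ 2.7182818286 := le_of_lt Real.exp_one_lt_d9
      _ ≤ 3 := by norm_num
      _ ≤ (n : ℝ) := by exact_mod_cast (by exact_mod_cast hn : (3:ℕ) ≤ n)
  calc |(g n : ℝ) - (n : ℝ) ^ 3| ≤ 99 * (n : ℝ) ^ 2 := h2
    _ ≤ 99 * (n : ℝ) ^ ((5 : ℝ) / 2) := by nlinarith [sq_nonneg (n:ℝ)]
    _ = 99 * (n : ℝ) ^ ((5 : ℝ) / 2) * 1 := by ring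
    _ ≤ 99 * (n : ℝ) ^ ((5 : ℝ) / 2) * Real.sqrt (Real.log n) := by
      have hpos : (0:ℝ) ≤ 99 * (n : ℝ) ^ ((5 : ℝ) / 2) := by positivity
      nlinarith
end

section
/- Let A, B ⊆ ℕ with s_A(x) ~ x^α and d_{A,B}(x) ~ x^β for some nonnegative reals α, β. Then x^{max(0, α−β)} ≪ s_B(x) ≪ x^{min(α+β, 1)}. -/
open Filter

lemma sf_mono (a : ℕ → ℕ) : Monotone (sf a) := by
  intro x y h
  exact Finset.sup_mono (Finset.range_subset_range.mpr (by omega))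

lemma Rf_le_succ {a : ℕ → ℕ} (ha : Function.Injective a) (n : ℕ) : Rf a n ≤ n + 1 := by
  classical
  have := Finset.card_le_card_of_injOn (fun p : ℕ × ℕ => p.1)
    (s := ((Finset.range (n+1) ×ˢ Finset.range (n+1)).filter
      (fun p => p.1 ≤ p.2 ∧ a p.1 + a p.2 = n)))
    (t := Finset.range (n+1))
    (by intro p hp
        simp only [Finset.mem_coe, Finset.mem_filter, Finset.mem_product, Finset.mem_range] at hp ⊢
        exact hp.1.1)
    (by intro p hp q hq hpq
        simp only [Finset.mem_coe, Finset.mem_filter, Finset.mem_product, Finset.mem_range] at hp hq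
        have h1 : a p.1 = a q.1 := congrArg a hpq
        have h2 : a p.2 = a q.2 := by
          have e1 := hp.2.2; have e2 := hq.2.2; omega
        exact Prod.ext hpq (ha h2))
  simpa [Rf] using this

lemma one_le_sf (b : ℕ → ℕ) (x : ℕ) (hx : b 0 + b 0 ≤ x) : 1 ≤ sf b x := by
  have h1 : 1 ≤ Rf b (b 0 + b 0) := by
    apply Finset.card_pos.mpr
    exact ⟨(0,0), by simp [Finset.mem_filter]⟩
  calc 1 ≤ Rf b (b 0 + b 0) := h1
    _ ≤ sf b x := Finset.le_sup (by simp only [Finset.mem_range]; omega)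

lemma Rf_key {a b : ℕ → ℕ} (hb : StrictMono b) {n D : ℕ}
    (hD : ∀ i, a i ≤ n → Nat.dist (a i) (b i) ≤ D) :
    Rf a n ≤ (4 * D + 1) * sf b (n + 2 * D) := by
  classical
  have hsub : ((Finset.range (n+1) ×ˢ Finset.range (n+1)).filter
      (fun p => p.1 ≤ p.2 ∧ a p.1 + a p.2 = n)) ⊆
      (Finset.Icc (n - 2*D) (n + 2*D)).biUnion
      (fun m => ((Finset.range (m+1) ×ˢ Finset.range (m+1)).filter
        (fun p => p.1 ≤ p.2 ∧ b p.1 + b p.2 = m))) := by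
    intro p hp
    simp only [Finset.mem_filter, Finset.mem_product, Finset.mem_range] at hp
    obtain ⟨⟨h1, h2⟩, hle, hsum⟩ := hp
    have ha1 : a p.1 ≤ n := by omega
    have ha2 : a p.2 ≤ n := by omega
    have hd1 := hD p.1 ha1
    have hd2 := hD p.2 ha2
    simp only [Nat.dist] at hd1 hd2
    refine Finset.mem_biUnion.mpr ⟨b p.1 + b p.2, ?_, ?_⟩
    · simp only [Finset.mem_Icc]; omega
    · simp only [Finset.mem_filter, Finset.mem_product, Finset.mem_range]
      have hb1 : p.1 ≤ b p.1 := hb.le_apply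
      have hb2 : p.2 ≤ b p.2 := hb.le_apply
      exact ⟨⟨by omega, by omega⟩, hle, trivial⟩
  calc Rf a n ≤ ((Finset.Icc (n - 2*D) (n + 2*D)).biUnion
      (fun m => ((Finset.range (m+1) ×ˢ Finset.range (m+1)).filter
        (fun p => p.1 ≤ p.2 ∧ b p.1 + b p.2 = m)))).card := Finset.card_le_card hsub
    _ ≤ ∑ m ∈ Finset.Icc (n - 2*D) (n + 2*D), Rf b m := Finset.card_biUnion_le
    _ ≤ (Finset.Icc (n - 2*D) (n + 2*D)).card * sf b (n + 2*D) := by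
        apply Finset.sum_le_card_nsmul
        intro m hm
        simp only [Finset.mem_Icc] at hm
        exact Finset.le_sup (f := Rf b) (Finset.mem_range.mpr (by omega))
    _ ≤ (4 * D + 1) * sf b (n + 2 * D) := by
        apply Nat.mul_le_mul_right
        rw [Nat.card_Icc]; omega

lemma sf_key {a b : ℕ → ℕ} (hb : StrictMono b) {x D : ℕ}
    (hD : ∀ i, a i ≤ x → Nat.dist (a i) (b i) ≤ D) :
    sf a x ≤ (4 * D + 1) * sf b (x + 2 * D) := by
  apply Finset.sup_le
  intro n hn
  simp only [Finset.mem_range] at hn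
  calc Rf a n ≤ (4 * D + 1) * sf b (n + 2 * D) :=
        Rf_key hb (fun i hi => hD i (by omega))
    _ ≤ (4 * D + 1) * sf b (x + 2 * D) :=
        Nat.mul_le_mul_left _ (sf_mono b (by omega))

lemma df_spec {a b : ℕ → ℕ} (ha : StrictMono a) (x : ℕ) :
    ∀ i, a i ≤ x → Nat.dist (a i) (b i) ≤ df a b x := by
  intro i hi
  have hix : i ≤ x := le_trans ha.le_apply hi
  have := Finset.le_sup (f := fun t => if a t ≤ x ∨ b t ≤ x then Nat.dist (a t) (b t) else 0)
    (Finset.mem_range.mpr (by omega : i < x + 1))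
  simpa [hi, df] using this

lemma df_spec' {a b : ℕ → ℕ} (hb : StrictMono b) (x : ℕ) :
    ∀ i, b i ≤ x → Nat.dist (b i) (a i) ≤ df a b x := by
  intro i hi
  have hix : i ≤ x := le_trans hb.le_apply hi
  have := Finset.le_sup (f := fun t => if a t ≤ x ∨ b t ≤ x then Nat.dist (a t) (b t) else 0)
    (Finset.mem_range.mpr (by omega : i < x + 1))
  rw [Nat.dist_comm]
  simpa [hi, df] using this

lemma sf_le_succ {a : ℕ → ℕ} (ha : Function.Injective a) (x : ℕ) : sf a x ≤ x + 1 := by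
  apply Finset.sup_le
  intro n hn
  simp only [Finset.mem_range] at hn
  exact le_trans (Rf_le_succ ha n) (by omega)

lemma small_pow {β : ℝ} (hβ1 : β < 1) : ∀ᶠ y : ℕ in atTop, (4:ℝ) * (y:ℝ)^β ≤ (y:ℝ) := by
  have hinf : Tendsto (fun y:ℕ => (y:ℝ)^(1-β)) atTop atTop :=
    (tendsto_rpow_atTop (by linarith)).comp tendsto_natCast_atTop_atTop
  filter_upwards [hinf.eventually_ge_atTop 4, eventually_ge_atTop 1] with y h4 hy
  have hy0 : (0:ℝ) < (y:ℝ) := by exact_mod_cast Nat.lt_of_lt_of_le Nat.zero_lt_one hy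
  have h : (4:ℝ) * (y:ℝ)^β ≤ (y:ℝ)^(1-β) * (y:ℝ)^β :=
    mul_le_mul_of_nonneg_right h4 (Real.rpow_nonneg hy0.le β)
  rwa [← Real.rpow_add hy0, sub_add_cancel, Real.rpow_one] at h

theorem stmt18 (a b : ℕ → ℕ) (ha : StrictMono a) (hb : StrictMono b)
    (α β : ℝ) (hα : 0 ≤ α) (hβ : 0 ≤ β)
    (hs : Tendsto (fun x : ℕ => (sf a x : ℝ) / (x : ℝ) ^ α) atTop (nhds 1))
    (hd : Tendsto (fun x : ℕ => (df a b x : ℝ) / (x : ℝ) ^ β) atTop (nhds 1)) :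
    (∃ c : ℝ, ∀ᶠ x : ℕ in atTop, (x : ℝ) ^ max 0 (α - β) ≤ c * (sf b x : ℝ)) ∧
    (∃ C : ℝ, ∀ᶠ x : ℕ in atTop, (sf b x : ℝ) ≤ C * (x : ℝ) ^ min (α + β) 1) := by
  have hainj : Function.Injective a := ha.injective
  have hbinj : Function.Injective b := hb.injective
  have eA : ∀ᶠ y : ℕ in atTop,
      (1/2 : ℝ) * (y:ℝ)^α ≤ (sf a y : ℝ) ∧ (sf a y : ℝ) ≤ 2 * (y:ℝ)^α := by
    filter_upwards [hs.eventually (eventually_ge_nhds (by norm_num : (1/2:ℝ) < 1)),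
      hs.eventually (eventually_le_nhds (by norm_num : (1:ℝ) < 2)),
      eventually_ge_atTop 1] with y h1 h2 hy
    have hy1 : (1:ℝ) ≤ (y:ℝ) := by exact_mod_cast hy
    have hpos : (0:ℝ) < (y:ℝ)^α := Real.rpow_pos_of_pos (by linarith) α
    constructor
    · rw [le_div_iff₀ hpos] at h1; linarith
    · rw [div_le_iff₀ hpos] at h2; linarith
  have eD : ∀ᶠ y : ℕ in atTop, (df a b y : ℝ) ≤ 2 * (y:ℝ)^β := by
    filter_upwards [hd.eventually (eventually_le_nhds (by norm_num : (1:ℝ) < 2)),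
      eventually_ge_atTop 1] with y h2 hy
    have hy1 : (1:ℝ) ≤ (y:ℝ) := by exact_mod_cast hy
    have hpos : (0:ℝ) < (y:ℝ)^β := Real.rpow_pos_of_pos (by linarith) β
    rw [div_le_iff₀ hpos] at h2; linarith
  have hα1 : α ≤ 1 := by
    by_contra hcon
    push_neg at hcon
    have hinf : Tendsto (fun y:ℕ => (y:ℝ)^(α-1)) atTop atTop :=
      (tendsto_rpow_atTop (by linarith)).comp tendsto_natCast_atTop_atTop
    have hbad : ∀ᶠ y : ℕ in atTop, False := by
      filter_upwards [eA, hinf.eventually_ge_atTop 5, eventually_ge_atTop 1] with y hA h5 hy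
      have hy1 : (1:ℝ) ≤ (y:ℝ) := by exact_mod_cast hy
      have hy0 : (0:ℝ) < (y:ℝ) := by linarith
      have hle : (sf a y : ℝ) ≤ (y:ℝ) + 1 := by exact_mod_cast sf_le_succ hainj y
      have h4 : (y:ℝ)^α ≤ 4 * (y:ℝ) := by linarith [hA.1]
      have : (y:ℝ)^(α-1) ≤ 4 := by
        rw [Real.rpow_sub hy0, Real.rpow_one, div_le_iff₀ hy0]
        linarith
      linarith
    simpa using hbad.exists
  constructor
  · -- lower bound
    rcases le_or_gt α β with hab | hab
    · refine ⟨1, ?_⟩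
      rw [max_eq_left (by linarith : α - β ≤ 0)]
      filter_upwards [eventually_ge_atTop (b 0 + b 0)] with x hx
      have h1 : (1:ℝ) ≤ (sf b x : ℝ) := by exact_mod_cast one_le_sf b x hx
      simpa [Real.rpow_zero] using h1
    · have hβ1 : β < 1 := lt_of_lt_of_le hab hα1
      obtain ⟨N1, hN1⟩ := eventually_atTop.mp eA
      obtain ⟨N2, hN2⟩ := eventually_atTop.mp eD
      obtain ⟨N3, hN3⟩ := eventually_atTop.mp (small_pow hβ1)
      refine ⟨54, ?_⟩
      rw [max_eq_right (by linarith : (0:ℝ) ≤ α - β)]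
      filter_upwards [eventually_ge_atTop (2*N1 + 2*N2 + 2*N3 + 3)] with x hx
      set y := x / 2 with hydef
      have hy1 : 1 ≤ y := by omega
      obtain ⟨hA1, hA2⟩ := hN1 y (by omega)
      have hD1 := hN2 y (by omega)
      have hS := hN3 y (by omega)
      set d := df a b y with hd'
      have hyR : (1:ℝ) ≤ (y:ℝ) := by exact_mod_cast hy1
      have hy0 : (0:ℝ) < (y:ℝ) := by linarith
      have h2d : 2 * d ≤ y := by
        have h : ((2 * d : ℕ) : ℝ) ≤ (y:ℝ) := by push_cast; linarith
        exact_mod_cast h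
      have hxy : y + 2 * d ≤ x := by omega
      have hkey : sf a y ≤ (4 * d + 1) * sf b x :=
        le_trans (sf_key hb (df_spec ha y)) (Nat.mul_le_mul_left _ (sf_mono b hxy))
      have hsb0 : (0:ℝ) ≤ (sf b x : ℝ) := Nat.cast_nonneg _
      have hyβ : (1:ℝ) ≤ (y:ℝ)^β := Real.one_le_rpow hyR hβ
      have hkeyR : (1/2:ℝ) * (y:ℝ)^α ≤ 9 * (y:ℝ)^β * (sf b x : ℝ) := by
        calc (1/2:ℝ) * (y:ℝ)^α ≤ (sf a y : ℝ) := hA1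
          _ ≤ ((4*d+1 : ℕ):ℝ) * (sf b x:ℝ) := by exact_mod_cast hkey
          _ ≤ 9 * (y:ℝ)^β * (sf b x:ℝ) := by
              apply mul_le_mul_of_nonneg_right _ hsb0
              push_cast
              linarith
      have hyab : (y:ℝ)^α = (y:ℝ)^(α-β) * (y:ℝ)^β := by
        rw [← Real.rpow_add hy0]; ring_nf
      have hyβ0 : (0:ℝ) < (y:ℝ)^β := Real.rpow_pos_of_pos hy0 β
      have hlow : (y:ℝ)^(α-β) ≤ 18 * (sf b x : ℝ) := by
        rw [hyab] at hkeyR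
        have := (mul_le_mul_iff_of_pos_right hyβ0).mp
          (by linarith : (1/2 * (y:ℝ)^(α-β)) * (y:ℝ)^β ≤ (9 * (sf b x : ℝ)) * (y:ℝ)^β)
        linarith
      have hx3 : (x:ℝ) ≤ 3 * (y:ℝ) := by
        have h3 : x ≤ 3*y := by omega
        exact_mod_cast h3
      have hxab : (x:ℝ)^(α-β) ≤ 3 * (y:ℝ)^(α-β) := by
        calc (x:ℝ)^(α-β) ≤ (3*(y:ℝ))^(α-β) :=
              Real.rpow_le_rpow (Nat.cast_nonneg x) hx3 (by linarith)
          _ = 3^(α-β) * (y:ℝ)^(α-β) := Real.mul_rpow (by norm_num) hy0.le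
          _ ≤ 3 * (y:ℝ)^(α-β) := by
              apply mul_le_mul_of_nonneg_right _ (Real.rpow_nonneg hy0.le _)
              calc (3:ℝ)^(α-β) ≤ (3:ℝ)^(1:ℝ) :=
                    Real.rpow_le_rpow_of_exponent_le (by norm_num) (by linarith)
                _ = 3 := Real.rpow_one 3
      linarith
  · -- upper bound
    rcases le_or_gt 1 (α+β) with h1ab | h1ab
    · refine ⟨2, ?_⟩
      rw [min_eq_right h1ab]
      filter_upwards [eventually_ge_atTop 1] with x hx
      have hxR : (1:ℝ) ≤ (x:ℝ) := by exact_mod_cast hx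
      have h1 : (sf b x : ℝ) ≤ (x:ℝ) + 1 := by exact_mod_cast sf_le_succ hbinj x
      rw [Real.rpow_one]
      linarith
    · have hβ1 : β < 1 := by linarith
      have hα1' : α < 1 := by linarith
      obtain ⟨N1, hN1⟩ := eventually_atTop.mp eA
      obtain ⟨N2, hN2⟩ := eventually_atTop.mp eD
      obtain ⟨N3, hN3⟩ := eventually_atTop.mp (small_pow hβ1)
      refine ⟨54, ?_⟩
      rw [min_eq_left h1ab.le]
      filter_upwards [eventually_ge_atTop (N1 + N2 + N3 + 1)] with x hx
      have hx1 : 1 ≤ x := by omega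
      have hD1 := hN2 x (by omega)
      have hS := hN3 x (by omega)
      set d := df a b x with hd'
      have hxR : (1:ℝ) ≤ (x:ℝ) := by exact_mod_cast hx1
      have hx0 : (0:ℝ) < (x:ℝ) := by linarith
      have h2d : 2 * d ≤ x := by
        have h : ((2 * d : ℕ) : ℝ) ≤ (x:ℝ) := by push_cast; linarith
        exact_mod_cast h
      have hkey : sf b x ≤ (4 * d + 1) * sf a (x + 2 * d) :=
        sf_key ha (df_spec' hb x)
      obtain ⟨_, hA2⟩ := hN1 (x + 2*d) (by omega)
      have hxβ : (1:ℝ) ≤ (x:ℝ)^β := Real.one_le_rpow hxR hβ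
      have hx2d : ((x + 2*d : ℕ):ℝ)^α ≤ 2 * (x:ℝ)^α := by
        calc ((x + 2*d : ℕ):ℝ)^α ≤ (2*(x:ℝ))^α := by
              apply Real.rpow_le_rpow (Nat.cast_nonneg _) _ hα
              push_cast
              have : (2*d:ℝ) ≤ (x:ℝ) := by push_cast at h2d ⊢; exact_mod_cast h2d
              linarith
          _ = 2^α * (x:ℝ)^α := Real.mul_rpow (by norm_num) hx0.le
          _ ≤ 2 * (x:ℝ)^α := by
              apply mul_le_mul_of_nonneg_right _ (Real.rpow_nonneg hx0.le _)
              calc (2:ℝ)^α ≤ (2:ℝ)^(1:ℝ) :=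
                    Real.rpow_le_rpow_of_exponent_le (by norm_num) (by linarith)
                _ = 2 := Real.rpow_one 2
      have hxα0 : (0:ℝ) ≤ (x:ℝ)^α := Real.rpow_nonneg hx0.le _
      have hchain : (sf b x : ℝ) ≤ 9 * (x:ℝ)^β * (2 * (2 * (x:ℝ)^α)) := by
        calc (sf b x : ℝ) ≤ ((4*d+1 : ℕ):ℝ) * (sf a (x + 2*d) : ℝ) := by exact_mod_cast hkey
          _ ≤ (9 * (x:ℝ)^β) * (2 * ((x + 2*d : ℕ):ℝ)^α) := by
              apply mul_le_mul
              · push_cast; linarith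
              · exact hA2
              · exact Nat.cast_nonneg _
              · positivity
          _ ≤ 9 * (x:ℝ)^β * (2 * (2 * (x:ℝ)^α)) := by
              apply mul_le_mul_of_nonneg_left _ (by positivity)
              linarith
      have hadd : (x:ℝ)^(α+β) = (x:ℝ)^α * (x:ℝ)^β := Real.rpow_add hx0 α β
      rw [hadd]
      nlinarith [Real.rpow_pos_of_pos hx0 β, Real.rpow_pos_of_pos hx0 α]
end

section
/- Let A, B ⊆ ℕ with s_A(x) → ∞ and d_{A,B}(x) → ∞. Then max{1, s_A(x − 2·d_{A,B}(x))/d_{A,B}(x)} ≪ s_B(x) ≪ s_A(x + 2·d_{A,B}(x))·d_{A,B}(x). -/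
open Filter

lemma df_comm (a b : ℕ → ℕ) (x : ℕ) : df a b x = df b a x := by
  unfold df
  congr 1
  funext t
  by_cases h : a t ≤ x ∨ b t ≤ x
  · rw [if_pos h, if_pos h.symm, Nat.dist_comm]
  · rw [if_neg h, if_neg (fun h' => h h'.symm)]

lemma dist_le_df (a b : ℕ → ℕ) (ha : StrictMono a) (hb : StrictMono b) (x t : ℕ)
    (h : a t ≤ x ∨ b t ≤ x) : Nat.dist (a t) (b t) ≤ df a b x := by
  have ht : t < x + 1 := by
    rcases h with h | h
    · exact Nat.lt_succ_of_le ((ha.id_le t).trans h)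
    · exact Nat.lt_succ_of_le ((hb.id_le t).trans h)
  have := Finset.le_sup (f := fun t => if a t ≤ x ∨ b t ≤ x then Nat.dist (a t) (b t) else 0)
    (Finset.mem_range.2 ht)
  simp only [if_pos h] at this; exact this

lemma key (a b : ℕ → ℕ) (ha : StrictMono a) (hb : StrictMono b) (x n : ℕ) (hn : n ≤ x) :
    Rf a n ≤ (4 * df a b x + 1) * sf b (n + 2 * df a b x) := by
  set d := df a b x with hd
  set S := (Finset.range (n+1) ×ˢ Finset.range (n+1)).filter
    (fun p => p.1 ≤ p.2 ∧ a p.1 + a p.2 = n) with hS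
  have hmap : ∀ p ∈ S, b p.1 + b p.2 ∈ Finset.Icc (n - 2 * d) (n + 2 * d) := by
    intro p hp
    simp only [hS, Finset.mem_filter, Finset.mem_product, Finset.mem_range] at hp
    obtain ⟨⟨h1, h2⟩, h3, h4⟩ := hp
    have d1 : Nat.dist (a p.1) (b p.1) ≤ d := dist_le_df a b ha hb x p.1 (Or.inl (by omega))
    have d2 : Nat.dist (a p.2) (b p.2) ≤ d := dist_le_df a b ha hb x p.2 (Or.inl (by omega))
    simp only [Nat.dist] at d1 d2
    simp only [Finset.mem_Icc]
    omega
  have hcard : Rf a n = ∑ m ∈ Finset.Icc (n - 2 * d) (n + 2 * d),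
      (S.filter (fun p => b p.1 + b p.2 = m)).card := by
    rw [Rf]
    exact Finset.card_eq_sum_card_fiberwise hmap
  have hfiber : ∀ m ∈ Finset.Icc (n - 2 * d) (n + 2 * d),
      (S.filter (fun p => b p.1 + b p.2 = m)).card ≤ sf b (n + 2 * d) := by
    intro m hm
    have hm' : m ≤ n + 2 * d := (Finset.mem_Icc.1 hm).2
    have hsub : S.filter (fun p => b p.1 + b p.2 = m) ⊆
        (Finset.range (m+1) ×ˢ Finset.range (m+1)).filter
          (fun p => p.1 ≤ p.2 ∧ b p.1 + b p.2 = m) := by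
      intro p hp
      simp only [hS, Finset.mem_filter, Finset.mem_product, Finset.mem_range] at hp ⊢
      obtain ⟨⟨⟨h1, h2⟩, h3, h4⟩, h5⟩ := hp
      have e1 : p.1 ≤ b p.1 := hb.id_le p.1
      have e2 : p.2 ≤ b p.2 := hb.id_le p.2
      omega
    calc (S.filter (fun p => b p.1 + b p.2 = m)).card
        ≤ Rf b m := Finset.card_le_card hsub
      _ ≤ sf b (n + 2 * d) := Finset.le_sup (Finset.mem_range.2 (by omega))
  calc Rf a n = _ := hcard
    _ ≤ (Finset.Icc (n - 2*d) (n + 2*d)).card * sf b (n + 2*d) := by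
        simpa using Finset.sum_le_card_nsmul _ _ _ hfiber
    _ ≤ (4 * d + 1) * sf b (n + 2*d) := Nat.mul_le_mul_right _ (by rw [Nat.card_Icc]; omega)

lemma sf_b_le (a b : ℕ → ℕ) (ha : StrictMono a) (hb : StrictMono b) (x : ℕ) :
    sf b x ≤ (4 * df a b x + 1) * sf a (x + 2 * df a b x) := by
  apply Finset.sup_le
  intro m hm
  have hm' : m ≤ x := by simpa using Nat.lt_succ_iff.mp (Finset.mem_range.1 hm)
  calc Rf b m ≤ (4 * df b a x + 1) * sf a (m + 2 * df b a x) := key b a hb ha x m hm'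
    _ = (4 * df a b x + 1) * sf a (m + 2 * df a b x) := by rw [df_comm]
    _ ≤ (4 * df a b x + 1) * sf a (x + 2 * df a b x) :=
        Nat.mul_le_mul_left _ (sf_mono a (by omega))

lemma sf_a_le (a b : ℕ → ℕ) (ha : StrictMono a) (hb : StrictMono b) (x : ℕ)
    (hx : 2 * df a b x ≤ x) :
    sf a (x - 2 * df a b x) ≤ (4 * df a b x + 1) * sf b x := by
  apply Finset.sup_le
  intro n hn
  have hn' : n ≤ x - 2 * df a b x := Nat.lt_succ_iff.mp (Finset.mem_range.1 hn)
  calc Rf a n ≤ (4 * df a b x + 1) * sf b (n + 2 * df a b x) := key a b ha hb x n (by omega)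
    _ ≤ (4 * df a b x + 1) * sf b x := Nat.mul_le_mul_left _ (sf_mono b (by omega))

lemma sf_zero_le (a : ℕ → ℕ) : sf a 0 ≤ 1 := by
  apply Finset.sup_le
  intro n hn
  have : n = 0 := by simpa using Finset.mem_range.1 hn
  subst this
  calc Rf a 0 ≤ ((Finset.range 1 ×ˢ Finset.range 1)).card := Finset.card_filter_le _ _
    _ = 1 := by simp

lemma sf_b_pos (b : ℕ → ℕ) (x : ℕ) (hx : 2 * b 0 ≤ x) : 1 ≤ sf b x := by
  have h1 : 1 ≤ Rf b (2 * b 0) := by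
    rw [Rf]
    apply Finset.card_pos.2
    exact ⟨(0, 0), by simp [Finset.mem_filter, Finset.mem_product]; omega⟩
  calc 1 ≤ Rf b (2 * b 0) := h1
    _ ≤ sf b x := Finset.le_sup (Finset.mem_range.2 (by omega))

theorem stmt19 (a b : ℕ → ℕ) (ha : StrictMono a) (hb : StrictMono b)
    (hsA : Tendsto (sf a) atTop atTop)
    (hdA : Tendsto (df a b) atTop atTop) :
    (∃ c : ℝ, ∀ᶠ x : ℕ in atTop,
      max 1 ((sf a (x - 2 * df a b x) : ℝ) / (df a b x : ℝ)) ≤ c * (sf b x : ℝ)) ∧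
    (∃ C : ℝ, ∀ᶠ x : ℕ in atTop,
      (sf b x : ℝ) ≤ C * ((sf a (x + 2 * df a b x) : ℝ) * (df a b x : ℝ))) := by
  have hd1 : ∀ᶠ x : ℕ in atTop, 1 ≤ df a b x := hdA.eventually_ge_atTop 1
  have hx1 : ∀ᶠ x : ℕ in atTop, 2 * b 0 ≤ x := eventually_ge_atTop _
  constructor
  · refine ⟨5, ?_⟩
    filter_upwards [hd1, hx1] with x hd hx
    set d := df a b x with hdd
    have hsb : 1 ≤ sf b x := sf_b_pos b x hx
    -- key nat inequality
    have hnat : sf a (x - 2 * d) ≤ 5 * d * sf b x := by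
      by_cases h2 : 2 * d ≤ x
      · calc sf a (x - 2 * d) ≤ (4 * d + 1) * sf b x := sf_a_le a b ha hb x h2
          _ ≤ 5 * d * sf b x := Nat.mul_le_mul_right _ (by omega)
      · have hx0 : x - 2 * d = 0 := by omega
        rw [hx0]
        calc sf a 0 ≤ 1 := sf_zero_le a
          _ ≤ 5 * d * sf b x := by
              have : 1 * 1 ≤ (5 * d) * sf b x := Nat.mul_le_mul (by omega) hsb
              omega
    have hdpos : (0 : ℝ) < (d : ℝ) := by exact_mod_cast hd
    have hsbR : (1 : ℝ) ≤ (sf b x : ℝ) := by exact_mod_cast hsb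
    rw [max_le_iff]
    constructor
    · nlinarith
    · rw [div_le_iff₀ hdpos]
      have : (sf a (x - 2 * d) : ℝ) ≤ 5 * d * sf b x := by exact_mod_cast hnat
      nlinarith
  · refine ⟨5, ?_⟩
    filter_upwards [hd1] with x hd
    set d := df a b x with hdd
    have hnat : sf b x ≤ 5 * (sf a (x + 2 * d) * d) := by
      calc sf b x ≤ (4 * d + 1) * sf a (x + 2 * d) := sf_b_le a b ha hb x
        _ ≤ 5 * d * sf a (x + 2 * d) := Nat.mul_le_mul_right _ (by omega)
        _ = 5 * (sf a (x + 2 * d) * d) := by ring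
    exact_mod_cast hnat
end
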